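/- Let m > 1, ν > 0, c > 0, σ > 0 be real and F : (0,1) → ℝ a function. Let I ⊆ ℝ be an open interval and (u, r) : I → (0,1) × (0,1) a continuously differentiable solution of the planar system (singular). Then u'(ξ) < 0 for all ξ ∈ I, the flux z(ξ) := ν·u(ξ)^m·u'(ξ)/√(u(ξ)² + (ν²/c²)·u'(ξ)²) satisfies z(ξ) = −c·u(ξ)^m·r(ξ), z is differentiable on I, and z'(ξ) + σ·u'(ξ) + F(u(ξ)) = 0 for all ξ ∈ I; i.e. u is a classical solution of the traveling-wave equation ν·(u^m·u'/√(u² + (ν²/c²)·u'²))' + σ·u' + F(u) = 0 on I. -/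

import Mathlib

/-- A `C¹` solution `(u,r)` of the planar traveling-wave system (singular) on an
open interval, with values in `(0,1) × (0,1)`, has `u' < 0`, its flux
`z = ν·u^m·u'/√(u² + (ν²/c²)·u'²)` equals `-c·u^m·r`, and `z` is differentiable
with `z' + σ·u' + F(u) = 0`; i.e. `u` is a classical solution of the
traveling-wave equation. -/
theorem stmt14 (m ν c σ : ℝ) (hm : 1 < m) (hν : 0 < ν) (hc : 0 < c) (hσ : 0 < σ)
    (F : ℝ → ℝ) (a b : ℝ)
    (u r u' r' : ℝ → ℝ)
    (humem : ∀ ξ ∈ Set.Ioo a b, u ξ ∈ Set.Ioo (0:ℝ) 1)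
    (hrmem : ∀ ξ ∈ Set.Ioo a b, r ξ ∈ Set.Ioo (0:ℝ) 1)
    (hu : ∀ ξ ∈ Set.Ioo a b, HasDerivAt u (u' ξ) ξ)
    (hr : ∀ ξ ∈ Set.Ioo a b, HasDerivAt r (r' ξ) ξ)
    (hu'c : ContinuousOn u' (Set.Ioo a b)) (hr'c : ContinuousOn r' (Set.Ioo a b))
    (hequ : ∀ ξ ∈ Set.Ioo a b,
      u' ξ = -(c / ν) * r ξ * u ξ / Real.sqrt (1 - (r ξ) ^ 2))
    (heqr : ∀ ξ ∈ Set.Ioo a b,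
      r' ξ = (u ξ) ^ (1 - m) * (r ξ / Real.sqrt (1 - (r ξ) ^ 2)) *
          (m * (u ξ) ^ (m - 1) * (c / ν) * r ξ - σ / ν) + F (u ξ) / (c * (u ξ) ^ m)) :
    (∀ ξ ∈ Set.Ioo a b, u' ξ < 0) ∧
    (∀ ξ ∈ Set.Ioo a b,
      ν * (u ξ) ^ m * u' ξ / Real.sqrt ((u ξ) ^ 2 + (ν ^ 2 / c ^ 2) * (u' ξ) ^ 2) =
        -c * (u ξ) ^ m * r ξ) ∧
    (∀ ξ ∈ Set.Ioo a b,
      HasDerivAt (fun η => ν * (u η) ^ m * u' η /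
          Real.sqrt ((u η) ^ 2 + (ν ^ 2 / c ^ 2) * (u' η) ^ 2))
        (-(σ * u' ξ + F (u ξ))) ξ) := by
  have hS : ∀ ξ ∈ Set.Ioo a b, 0 < Real.sqrt (1 - (r ξ) ^ 2) := by
    intro ξ hξ
    have h := hrmem ξ hξ
    exact Real.sqrt_pos.2 (by nlinarith [h.1, h.2])
  have hS2 : ∀ ξ ∈ Set.Ioo a b, (Real.sqrt (1 - (r ξ) ^ 2)) ^ 2 = 1 - (r ξ) ^ 2 := by
    intro ξ hξ
    have h := hrmem ξ hξ
    exact Real.sq_sqrt (by nlinarith [h.1, h.2])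
  have hMpos : ∀ ξ ∈ Set.Ioo a b, 0 < (u ξ) ^ m := by
    intro ξ hξ
    exact Real.rpow_pos_of_pos (humem ξ hξ).1 m
  have h1 : ∀ ξ ∈ Set.Ioo a b, u' ξ < 0 := by
    intro ξ hξ
    rw [hequ ξ hξ]
    apply div_neg_of_neg_of_pos _ (hS ξ hξ)
    have h1 := (hrmem ξ hξ).1
    have h2 := (humem ξ hξ).1
    have := mul_pos (mul_pos (div_pos hc hν) h1) h2
    linarith
  have h2 : ∀ ξ ∈ Set.Ioo a b,
      ν * (u ξ) ^ m * u' ξ / Real.sqrt ((u ξ) ^ 2 + (ν ^ 2 / c ^ 2) * (u' ξ) ^ 2) =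
        -c * (u ξ) ^ m * r ξ := by
    intro ξ hξ
    have hup := (humem ξ hξ).1
    have hs := hS ξ hξ
    have hs2 := hS2 ξ hξ
    have hin : (u ξ) ^ 2 + (ν ^ 2 / c ^ 2) * (u' ξ) ^ 2
        = (u ξ / Real.sqrt (1 - (r ξ) ^ 2)) ^ 2 := by
      rw [hequ ξ hξ]
      field_simp
      linear_combination hs2
    rw [hin, Real.sqrt_sq (le_of_lt (div_pos hup hs)), hequ ξ hξ]
    field_simp
  refine ⟨h1, h2, ?_⟩
  intro ξ hξ
  have hup := (humem ξ hξ).1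
  have hs := hS ξ hξ
  have hM := hMpos ξ hξ
  -- derivative of the auxiliary function -c * u^m * r
  have hA : HasDerivAt (fun η => (u η) ^ m) (u' ξ * m * (u ξ) ^ (m - 1)) ξ :=
    (hu ξ hξ).rpow_const (Or.inl (ne_of_gt hup))
  have hg : HasDerivAt (fun η => -c * ((u η) ^ m * r η))
      (-c * ((u' ξ * m * (u ξ) ^ (m - 1)) * r ξ + (u ξ) ^ m * r' ξ)) ξ :=
    (hA.mul (hr ξ hξ)).const_mul (-c)
  have heqr' : (u ξ) ^ m * r' ξ =
      u ξ * (r ξ / Real.sqrt (1 - (r ξ) ^ 2)) *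
        (m * (u ξ) ^ (m - 1) * (c / ν) * r ξ - σ / ν) + F (u ξ) / c := by
    have hpm : (u ξ) ^ m * (u ξ) ^ (1 - m) = u ξ := by
      rw [← Real.rpow_add hup]
      norm_num
    have e1 : (u ξ) ^ m * (F (u ξ) / (c * (u ξ) ^ m)) = F (u ξ) / c := by
      field_simp
    rw [heqr ξ hξ, mul_add, e1]
    have hsne := ne_of_gt hs
    have hνne := ne_of_gt hν
    linear_combination (r ξ / Real.sqrt (1 - r ξ ^ 2) *
      (m * u ξ ^ (m - 1) * (c / ν) * r ξ - σ / ν)) * hpm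
  have hkey : -c * ((u' ξ * m * (u ξ) ^ (m - 1)) * r ξ + (u ξ) ^ m * r' ξ)
      = -(σ * u' ξ + F (u ξ)) := by
    rw [heqr', hequ ξ hξ]
    field_simp
    ring
  have hg2 : HasDerivAt (fun η => -c * ((u η) ^ m * r η)) (-(σ * u' ξ + F (u ξ))) ξ := by
    rw [← hkey]; exact hg
  apply hg2.congr_of_eventuallyEq
  filter_upwards [isOpen_Ioo.mem_nhds hξ] with η hη
  rw [h2 η hη]; ring
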